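/- If k ≠ m and a matrix A ∈ M_{k×m} has fewer than min{k,m} zero entries, then A has total support. -/

import Mathlib

open Matrix BigOperators

/-- A (possibly rectangular, as long as the index types have the same cardinality)
matrix has support if some generalized permutation diagonal has nonzero product. -/
def HasSupport {R C α : Type*} [Fintype R] [Fintype C] [CommMonoidWithZero α]
    (A : Matrix R C α) : Prop :=
  ∃ σ : R ≃ C, ∏ i, A i (σ i) ≠ 0

/-- Total support: every nonzero entry lies on a nonzero generalized permutation diagonal. -/
def HasTotalSupport {R C α : Type*} [Fintype R] [Fintype C] [CommMonoidWithZero α]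
    (A : Matrix R C α) : Prop :=
  ∀ p q, A p q ≠ 0 → ∃ σ : R ≃ C, σ p = q ∧ ∏ i, A i (σ i) ≠ 0

/-- The Kronecker product `A ⊗ 1_{m×k}` of `A ∈ M_{k×m}` with the all-ones matrix `1_{m×k}`. -/
def kronOnes {R C α : Type*} (A : Matrix R C α) : Matrix (R × C) (C × R) α :=
  Matrix.of fun p q => A p.1 q.1

/-- A rectangular matrix has support if `A ⊗ 1_{m×k}` has support. -/
def RectSupport {R C α : Type*} [Fintype R] [Fintype C] [CommMonoidWithZero α]
    (A : Matrix R C α) : Prop :=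
  HasSupport (kronOnes A)

/-- A rectangular matrix has total support if `A ⊗ 1_{m×k}` has total support. -/
def RectTotalSupport {R C α : Type*} [Fintype R] [Fintype C] [CommMonoidWithZero α]
    (A : Matrix R C α) : Prop :=
  HasTotalSupport (kronOnes A)

private lemma core_int (k m r d z : ℤ) (hkm : k ≠ m) (h1 : 1 ≤ r) (h2 : r + 1 ≤ k)
    (hd0 : 0 ≤ d) (h3 : r * d ≤ z) (h4 : z + 1 ≤ k) (h5 : z + 1 ≤ m) :
    m * r + 1 + k * d ≤ k * m := by
  have hd : d ≤ z := le_trans (le_mul_of_one_le_left hd0 h1) h3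
  rcases lt_or_gt_of_ne hkm with h | h
  · have key : 0 ≤ r * (k * m - m * r - k * d - 1) := by
      nlinarith [mul_nonneg (by linarith : (0:ℤ) ≤ r - 1) (by linarith : (0:ℤ) ≤ k - 1 - r),
        mul_nonneg (by linarith : (0:ℤ) ≤ m - k - 1) (by linarith : (0:ℤ) ≤ k - 1 - r),
        mul_nonneg (by linarith : (0:ℤ) ≤ k) (by linarith : (0:ℤ) ≤ z - r * d)]
    nlinarith [key]
  · rcases eq_or_lt_of_le hd0 with hd1 | hd1
    · nlinarith
    · have key : 0 ≤ d * (k * m - m * r - k * d - 1) := by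
        nlinarith [mul_nonneg (by linarith : (0:ℤ) ≤ d - 1) (by linarith : (0:ℤ) ≤ m - 1 - d),
          mul_nonneg (by linarith : (0:ℤ) ≤ k - m - 1) (by linarith : (0:ℤ) ≤ m - 1 - d),
          mul_nonneg (by linarith : (0:ℤ) ≤ m) (by linarith : (0:ℤ) ≤ z - r * d)]
      nlinarith [key]

private lemma core_nat (k m r d z : ℕ) (hkm : k ≠ m) (h1 : 1 ≤ r) (h2 : r < k)
    (h3 : r * d ≤ z) (h4 : z < k) (h5 : z < m) :
    m * r + 1 + k * d ≤ k * m := by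
  have := core_int (k : ℤ) m r d z (by exact_mod_cast hkm) (by exact_mod_cast h1)
    (by exact_mod_cast h2) (by positivity) (by exact_mod_cast h3)
    (by exact_mod_cast h4) (by exact_mod_cast h5)
  exact_mod_cast this

/-- If `k ≠ m` and `A ∈ M_{k×m}` has fewer than `min k m` zero entries,
then `A` has total support. -/
theorem rectTotalSupport_of_few_zeros {k m : ℕ} (hkm : k ≠ m)
    (A : Matrix (Fin k) (Fin m) ℝ)
    (hz : {p : Fin k × Fin m | A p.1 p.2 = 0}.ncard < min k m) :
    RectTotalSupport A := by
  classical
  intro p q hpq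
  have hApq : A p.1 q.1 ≠ 0 := hpq
  set Zf : Finset (Fin k × Fin m) := Finset.univ.filter (fun x => A x.1 x.2 = 0) with hZf
  have hzcard : Zf.card < min k m := by
    have h1 : {p : Fin k × Fin m | A p.1 p.2 = 0}.ncard = Zf.card := by
      rw [Set.ncard_eq_toFinset_card']
      congr 1
      ext x
      simp [hZf]
    rwa [h1] at hz
  have hzk : Zf.card < k := lt_of_lt_of_le hzcard (min_le_left _ _)
  have hzm : Zf.card < m := lt_of_lt_of_le hzcard (min_le_right _ _)
  set nz : Fin k → Finset (Fin m) := fun i => Finset.univ.filter (fun j => A i j ≠ 0) with hnz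
  set t : Fin k × Fin m → Finset (Fin m × Fin k) :=
    fun x => if x = p then {q} else (nz x.1 ×ˢ Finset.univ).erase q with ht
  have hall : ∀ S : Finset (Fin k × Fin m), S.card ≤ (S.biUnion t).card := by
    intro S
    set S₀ := S.erase p with hS₀
    set rows := S₀.image Prod.fst with hrows
    set U := rows.biUnion nz with hU
    set E := (U ×ˢ (Finset.univ : Finset (Fin k))).erase q with hE
    -- the biUnion over S₀ is exactly E
    have hbU : S₀.biUnion t = E := by
      ext x
      simp only [hE, Finset.mem_biUnion, Finset.mem_erase, Finset.mem_product,
        Finset.mem_univ, and_true]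
      constructor
      · rintro ⟨a, haS, hx⟩
        have hap : a ≠ p := Finset.ne_of_mem_erase haS
        rw [ht] at hx
        simp only [if_neg hap, Finset.mem_erase, Finset.mem_product, Finset.mem_univ,
          and_true] at hx
        refine ⟨hx.1, ?_⟩
        rw [hU]
        exact Finset.mem_biUnion.2 ⟨a.1, Finset.mem_image_of_mem _ haS, hx.2⟩
      · rintro ⟨hxq, hxU⟩
        rw [hU, Finset.mem_biUnion] at hxU
        obtain ⟨i, hi, hxi⟩ := hxU
        rw [hrows, Finset.mem_image] at hi
        obtain ⟨a, ha, hai⟩ := hi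
        refine ⟨a, ha, ?_⟩
        have hap : a ≠ p := Finset.ne_of_mem_erase ha
        rw [ht]
        simp only [if_neg hap, Finset.mem_erase, Finset.mem_product, Finset.mem_univ, and_true]
        exact ⟨hxq, hai ▸ hxi⟩
    -- zero counting
    have hzsub : rows ×ˢ (Finset.univ \ U) ⊆ Zf := by
      intro x hx
      rw [Finset.mem_product, Finset.mem_sdiff] at hx
      rw [hZf, Finset.mem_filter]
      refine ⟨Finset.mem_univ _, ?_⟩
      by_contra hne
      exact hx.2.2 (Finset.mem_biUnion.2 ⟨x.1, hx.1, by simp [hnz, hne]⟩)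
    have hum : U.card ≤ m := by
      simpa using Finset.card_le_univ U
    have hzineq : rows.card * (m - U.card) ≤ Zf.card := by
      have := Finset.card_le_card hzsub
      rwa [Finset.card_product, Finset.card_sdiff_of_subset (Finset.subset_univ _),
        Finset.card_univ, Fintype.card_fin] at this
    have hrk : rows.card ≤ k := by simpa using Finset.card_le_univ rows
    have hS₀sub : S₀ ⊆ rows ×ˢ Finset.univ := by
      intro x hx
      rw [Finset.mem_product]
      exact ⟨Finset.mem_image_of_mem _ hx, Finset.mem_univ _⟩
    have hS₀card : S₀.card ≤ rows.card * m := by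
      have := Finset.card_le_card hS₀sub
      rwa [Finset.card_product, Finset.card_univ, Fintype.card_fin] at this
    -- the key inequality
    have key : S₀.card ≤ E.card := by
      rcases Nat.eq_zero_or_pos rows.card with hr0 | hr1
      · have : S₀.card ≤ 0 := by
          have := hS₀card; rw [hr0] at this; simpa using this
        omega
      · rcases eq_or_lt_of_le hrk with hrk' | hrlt
        · -- rows = univ
          have hkpos : 0 < k := lt_of_lt_of_le hr1 hrk
          have hrowsuniv : rows = Finset.univ :=
            Finset.eq_univ_of_card rows (by rw [hrk', Fintype.card_fin])
          have hUuniv : U = Finset.univ := by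
            rw [Finset.eq_univ_iff_forall]
            intro j
            by_contra hj
            have hsub : (Finset.univ : Finset (Fin k)) ×ˢ ({j} : Finset (Fin m)) ⊆ Zf := by
              intro x hx
              rw [Finset.mem_product, Finset.mem_singleton] at hx
              rw [hZf, Finset.mem_filter]
              refine ⟨Finset.mem_univ _, ?_⟩
              by_contra hne
              exact hj (Finset.mem_biUnion.2 ⟨x.1, by rw [hrowsuniv]; exact Finset.mem_univ _,
                by rw [hx.2] at hne; simp [hnz, hne]⟩)
            have hcc := Finset.card_le_card hsub
            rw [Finset.card_product, Finset.card_univ, Fintype.card_fin,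
              Finset.card_singleton, Nat.mul_one] at hcc
            omega
          have hqmem : q ∈ U ×ˢ (Finset.univ : Finset (Fin k)) := by
            rw [Finset.mem_product, hUuniv]
            exact ⟨Finset.mem_univ _, Finset.mem_univ _⟩
          have hEcard : E.card + 1 = m * k := by
            rw [hE, Finset.card_erase_of_mem hqmem, Finset.card_product, Finset.card_univ,
              Fintype.card_fin, hUuniv, Finset.card_univ, Fintype.card_fin]
            have : 0 < m * k := Nat.mul_pos (by omega) hkpos
            omega
          have hpmem : p ∈ rows ×ˢ (Finset.univ : Finset (Fin m)) := by
            rw [Finset.mem_product, hrowsuniv]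
            exact ⟨Finset.mem_univ _, Finset.mem_univ _⟩
          have hS₀sub' : S₀ ⊆ (rows ×ˢ Finset.univ).erase p := by
            intro x hx
            exact Finset.mem_erase.2 ⟨Finset.ne_of_mem_erase hx, hS₀sub hx⟩
          have hS₀card' : S₀.card + 1 ≤ k * m := by
            have hcc := Finset.card_le_card hS₀sub'
            rw [Finset.card_erase_of_mem hpmem, Finset.card_product, Finset.card_univ,
              Fintype.card_fin, hrk'] at hcc
            have hkm1 : 0 < k * m := Nat.mul_pos hkpos (by omega)
            omega
          have hcomm : k * m = m * k := Nat.mul_comm k m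
          linarith
        · -- 1 ≤ rows.card < k
          have hcore := core_nat k m rows.card (m - U.card) Zf.card hkm hr1 hrlt hzineq hzk hzm
          have hsplit : k * U.card + k * (m - U.card) = k * m := by
            rw [← Nat.mul_add, Nat.add_sub_cancel' hum]
          have hmain : m * rows.card + 1 ≤ k * U.card := by linarith
          have hEge : U.card * k ≤ E.card + 1 := by
            by_cases hqU : q.1 ∈ U
            · have hqmem : q ∈ U ×ˢ (Finset.univ : Finset (Fin k)) :=
                Finset.mem_product.2 ⟨hqU, Finset.mem_univ _⟩
              rw [hE, Finset.card_erase_of_mem hqmem, Finset.card_product, Finset.card_univ,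
                Fintype.card_fin]
              have hU1 : 1 ≤ U.card := Finset.card_pos.2 ⟨q.1, hqU⟩
              have : 1 ≤ U.card * k := Nat.mul_pos hU1 (by omega)
              omega
            · have hqmem : q ∉ U ×ˢ (Finset.univ : Finset (Fin k)) := by
                rw [Finset.mem_product]; tauto
              rw [hE, Finset.erase_eq_of_notMem hqmem, Finset.card_product, Finset.card_univ,
                Fintype.card_fin]
              omega
          have hc1 : rows.card * m = m * rows.card := Nat.mul_comm _ _
          have hc2 : U.card * k = k * U.card := Nat.mul_comm _ _
          linarith
    -- conclude Hall's condition
    by_cases hpS : p ∈ S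
    · have hSins : S = insert p S₀ := by
        rw [hS₀, Finset.insert_erase hpS]
      have hScard : S.card = S₀.card + 1 := by
        rw [hS₀, Finset.card_erase_of_mem hpS]
        have : 0 < S.card := Finset.card_pos.2 ⟨p, hpS⟩
        omega
      have hbS : S.biUnion t = insert q E := by
        rw [hSins, Finset.biUnion_insert, hbU, ht]
        simp [Finset.insert_eq, -Finset.singleton_union]
      have hqE : q ∉ E := by
        rw [hE]; exact Finset.notMem_erase _ _
      rw [hbS, Finset.card_insert_of_notMem hqE, hScard]
      omega
    · have hSeq : S₀ = S := by rw [hS₀, Finset.erase_eq_of_notMem hpS]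
      rw [← hSeq, hbU]
      exact key
  obtain ⟨f, finj, hf⟩ := (Finset.all_card_le_biUnion_card_iff_exists_injective t).mp hall
  have hbij : Function.Bijective f :=
    (Fintype.bijective_iff_injective_and_card f).mpr
      ⟨finj, by simp [Fintype.card_prod, Nat.mul_comm]⟩
  refine ⟨Equiv.ofBijective f hbij, ?_, ?_⟩
  · have := hf p
    rw [ht] at this
    simpa using this
  · rw [Finset.prod_ne_zero_iff]
    intro i _
    show A i.1 ((Equiv.ofBijective f hbij) i).1 ≠ 0
    show A i.1 (f i).1 ≠ 0
    by_cases hip : i = p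
    · subst hip
      have := hf i
      rw [ht] at this
      simp at this
      rw [this]
      exact hApq
    · have := hf i
      rw [ht] at this
      simp only [if_neg hip, Finset.mem_erase, Finset.mem_product, Finset.mem_univ,
        and_true] at this
      have h2 := this.2
      rw [hnz] at h2
      simpa using h2
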